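/- Let Ω be a compact convex subset of ℝ³ with Lebesgue measure |Ω| > 0, let 0 < β < 1, κ > 0, δ > 0 and α > 0. Let H = L²(Ω) with Lebesgue measure, T : H → H a bounded linear operator, f^δ ∈ H, and let φ†, φ_α : ℝ³ → ℝ be continuously differentiable on a neighborhood of Ω and Lipschitz on Ω with constant κ, regarded as elements of H. Set K := (min_{x ∈ Ω} ‖∇φ_α(x)‖₂² + β)^{−1/2} and N := (∫_Ω ‖∇φ_α(x) − ∇φ†(x)‖₂² dx)^{1/2}. Assume: (i) ‖Tφ† − f^δ‖_{L²} ≤ δ; (ii) (1/2)‖Tφ_α − f^δ‖²_{L²} + α·J(φ_α) ≤ (1/2)‖Tφ† − f^δ‖²_{L²} + α·J(φ†); (iii) J(φ†) − J(φ_α) ≤ κ²|Ω|²·K·N; (iv) α ≤ δ²·K^{−1}/(2κ²|Ω|²). Then ‖Tφ_α − f^δ‖_{L²} ≤ δ·√(1 + N). -/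

import Mathlib

open MeasureTheory

lemma stmt12_aux (κ V K N a α : ℝ) (hκ : κ ≠ 0) (hV : V ≠ 0)
    (hK : 0 < K) (hN : 0 ≤ N) (hα : 0 ≤ α)
    (hrule : α ≤ a ^ 2 * K⁻¹ / (2 * κ ^ 2 * V ^ 2)) :
    2 * α * (κ ^ 2 * V ^ 2 * K * N) ≤ a ^ 2 * N := by
  have hfac : 0 ≤ κ ^ 2 * V ^ 2 * K * N := by positivity
  have h := mul_le_mul_of_nonneg_right hrule hfac
  have heq : a ^ 2 * K⁻¹ / (2 * κ ^ 2 * V ^ 2) * (κ ^ 2 * V ^ 2 * K * N)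
      = a ^ 2 * N / 2 := by
    field_simp
  nlinarith [h, heq]

/-- Discrepancy principle for smoothed-TV regularization: with
`H = L²(Ω)`, `K = (min_Ω ‖∇φ_α‖₂² + β)^{-1/2}`, `N = (∫_Ω ‖∇φ_α - ∇φ†‖₂²)^{1/2}`,
noise level `δ`, minimality of `φ_α` for the Tikhonov functional with smoothed-TV
penalty `J(w) = ∫_Ω √(‖∇w‖₂² + β)`, the bound `J(φ†) - J(φ_α) ≤ κ²|Ω|²·K·N`, and the
parameter choice `α ≤ δ²·K⁻¹/(2κ²|Ω|²)`, one gets `‖Tφ_α - f^δ‖ ≤ δ·√(1 + N)`. -/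
theorem stmt12 (Ω : Set (EuclideanSpace ℝ (Fin 3)))
    (hΩc : IsCompact Ω) (hΩconv : Convex ℝ Ω)
    (hΩpos : 0 < (volume Ω).toReal)
    (β κ δ α : ℝ) (hβ0 : 0 < β) (hβ1 : β < 1) (hκ : 0 < κ) (hδ : 0 < δ) (hα : 0 < α)
    (T : Lp ℝ 2 (volume.restrict Ω) →L[ℝ] Lp ℝ 2 (volume.restrict Ω))
    (fδ : Lp ℝ 2 (volume.restrict Ω))
    (φdag φα : EuclideanSpace ℝ (Fin 3) → ℝ)
    (Ud : Set (EuclideanSpace ℝ (Fin 3))) (hUd : IsOpen Ud) (hΩUd : Ω ⊆ Ud)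
    (hφdag : ContDiffOn ℝ 1 φdag Ud)
    (Ua : Set (EuclideanSpace ℝ (Fin 3))) (hUa : IsOpen Ua) (hΩUa : Ω ⊆ Ua)
    (hφα : ContDiffOn ℝ 1 φα Ua)
    (hlipd : ∀ x ∈ Ω, ∀ y ∈ Ω, |φdag x - φdag y| ≤ κ * ‖x - y‖)
    (hlipa : ∀ x ∈ Ω, ∀ y ∈ Ω, |φα x - φα y| ≤ κ * ‖x - y‖)
    (hmd : MemLp φdag 2 (volume.restrict Ω)) (hma : MemLp φα 2 (volume.restrict Ω))
    (K N : ℝ)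
    (hK : K = 1 / Real.sqrt (sInf ((fun x => ‖gradient φα x‖ ^ 2) '' Ω) + β))
    (hN : N = Real.sqrt (∫ x in Ω, ‖gradient φα x - gradient φdag x‖ ^ 2))
    (hnoise : ‖T (hmd.toLp φdag) - fδ‖ ≤ δ)
    (hmin : 1 / 2 * ‖T (hma.toLp φα) - fδ‖ ^ 2 +
        α * ∫ x in Ω, Real.sqrt (‖gradient φα x‖ ^ 2 + β) ≤
      1 / 2 * ‖T (hmd.toLp φdag) - fδ‖ ^ 2 +
        α * ∫ x in Ω, Real.sqrt (‖gradient φdag x‖ ^ 2 + β))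
    (hJdiff : (∫ x in Ω, Real.sqrt (‖gradient φdag x‖ ^ 2 + β)) -
        (∫ x in Ω, Real.sqrt (‖gradient φα x‖ ^ 2 + β)) ≤
      κ ^ 2 * (volume Ω).toReal ^ 2 * K * N)
    (hrule : α ≤ δ ^ 2 * K⁻¹ / (2 * κ ^ 2 * (volume Ω).toReal ^ 2)) :
    ‖T (hma.toLp φα) - fδ‖ ≤ δ * Real.sqrt (1 + N) := by
  have hΩne : Ω.Nonempty := by
    by_contra h
    rw [Set.not_nonempty_iff_eq_empty] at h
    simp [h] at hΩpos
  have hsInf : 0 ≤ sInf ((fun x => ‖gradient φα x‖ ^ 2) '' Ω) := by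
    apply Real.sInf_nonneg
    rintro y ⟨x, -, rfl⟩
    positivity
  have hKpos : 0 < K := by
    rw [hK]
    positivity
  have hNpos : 0 ≤ N := by rw [hN]; exact Real.sqrt_nonneg _
  set A := ‖T (hma.toLp φα) - fδ‖ with hA
  set B := ‖T (hmd.toLp φdag) - fδ‖ with hB
  have hAnn : 0 ≤ A := norm_nonneg _
  have hBnn : 0 ≤ B := norm_nonneg _
  have hV : 0 < (volume Ω).toReal := hΩpos
  have hsq : A ^ 2 ≤ δ ^ 2 * (1 + N) := by
    have hB2 : B ^ 2 ≤ δ ^ 2 := by nlinarith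
    have h1 : A ^ 2 ≤ δ ^ 2 + 2 * α * (κ ^ 2 * (volume Ω).toReal ^ 2 * K * N) := by
      nlinarith [hmin, hJdiff]
    have h2 : 2 * α * (κ ^ 2 * (volume Ω).toReal ^ 2 * K * N) ≤ δ ^ 2 * N :=
      stmt12_aux κ (volume Ω).toReal K N δ α (ne_of_gt hκ) (ne_of_gt hΩpos)
        hKpos hNpos hα.le hrule
    linarith
  calc A = Real.sqrt (A ^ 2) := by rw [Real.sqrt_sq hAnn]
    _ ≤ Real.sqrt (δ ^ 2 * (1 + N)) := Real.sqrt_le_sqrt hsq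
    _ = δ * Real.sqrt (1 + N) := by
        rw [Real.sqrt_mul (by positivity), Real.sqrt_sq hδ.le]
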